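/- Let $K \subseteq \mathbb{R}^n$ be a convex body with positive Lebesgue volume, and let $K'$ be a convex body. If for some positive integer $k$, $K'$ contains all points of $K \cap (k^{-1}\mathbb{Z})^n$, then $K'$ contains the inner parallel body $K^{\delta} = \{x \in K : \mathrm{dist}(x, \partial K) \geq \delta\}$ with $\delta = \sqrt{n}\, k^{-1}$. -/

import Mathlib

open MeasureTheory Metric Set

lemma mem_of_dist_le_infDist {E : Type*} [NormedAddCommGroup E] [NormedSpace ℝ E]
    {K : Set E} (hKcl : IsClosed K) {x y : E} (hx : x ∈ K)
    (hr : 0 < infDist x (frontier K)) (hy : dist x y ≤ infDist x (frontier K)) : y ∈ K := by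
  by_contra hyK
  have hxy : x ≠ y := fun h => hyK (h ▸ hx)
  set s := segment ℝ x y with hs
  by_cases hf : (s ∩ frontier K).Nonempty
  · obtain ⟨w, hws, hwf⟩ := hf
    have hwK : w ∈ K := hKcl.frontier_subset hwf
    obtain ⟨a, b, ha, hb, hab, hw⟩ := hws
    have hd : dist x w = b * dist x y := by
      rw [dist_eq_norm, dist_eq_norm, ← hw]
      have : x - (a • x + b • y) = b • (x - y) := by
        rw [smul_sub]
        have : a = 1 - b := by linarith
        rw [this]; module
      rw [this, norm_smul, Real.norm_eq_abs, abs_of_nonneg hb]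
    have hb1 : b < 1 := by
      rcases lt_or_eq_of_le (by linarith : b ≤ 1) with h | h
      · exact h
      · exfalso
        have ha0 : a = 0 := by linarith
        have hwy : w = y := by rw [← hw, ha0, h]; simp
        exact hyK (hwy ▸ hwK)
    have h1 : infDist x (frontier K) ≤ dist x w := infDist_le_dist_of_mem hwf
    have h2 : 0 < dist x y := dist_pos.2 hxy
    nlinarith
  · rw [Set.not_nonempty_iff_eq_empty] at hf
    have hdisj : Disjoint (frontier (interior K)) s := by
      rw [Set.disjoint_iff_inter_eq_empty, Set.inter_comm]
      exact Set.subset_empty_iff.1 (hf ▸ Set.inter_subset_inter_right s frontier_interior_subset)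
    have hcl := isClopen_preimage_val isOpen_interior hdisj
    haveI : PreconnectedSpace s :=
      Subtype.preconnectedSpace (convex_segment x y).isPreconnected
    have hxint : x ∈ interior K := by
      have hxf : x ∉ frontier K := fun h => by
        simp [infDist_zero_of_mem h] at hr
      rw [hKcl.frontier_eq] at hxf
      simp only [Set.mem_diff, not_and, not_not] at hxf
      exact hxf hx
    have hne : (Subtype.val ⁻¹' (interior K) : Set s).Nonempty :=
      ⟨⟨x, left_mem_segment ℝ x y⟩, hxint⟩
    have huniv := hcl.eq_univ hne
    have hyint : y ∈ interior K := by
      have : (⟨y, right_mem_segment ℝ x y⟩ : s) ∈ (Set.univ : Set s) := Set.mem_univ _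
      rw [← huniv] at this
      exact this
    exact hyK (interior_subset hyint)

theorem stmt1 {n : ℕ} (k : ℕ) (hk : 0 < k)
    (K K' : Set (EuclideanSpace ℝ (Fin n)))
    (hKne : K.Nonempty) (hKc : IsCompact K) (hKconv : Convex ℝ K)
    (hKvol : 0 < volume K)
    (hK'ne : K'.Nonempty) (hK'c : IsCompact K') (hK'conv : Convex ℝ K')
    (hlat : ∀ x ∈ K, (∀ i : Fin n, ∃ m : ℤ, x i = (m : ℝ) / (k : ℝ)) → x ∈ K') :
    {x ∈ K | Real.sqrt n / (k : ℝ) ≤ infDist x (frontier K)} ⊆ K' := by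
  intro x hx
  obtain ⟨hxK, hxd⟩ := hx
  rcases Nat.eq_zero_or_pos n with hn | hn
  · exact hlat x hxK fun i => absurd i.isLt (by omega)
  · have hkpos : (0:ℝ) < k := Nat.cast_pos.2 hk
    have hδ : 0 < Real.sqrt n / k :=
      div_pos (Real.sqrt_pos.2 (Nat.cast_pos.2 hn)) hkpos
    have hinf : 0 < infDist x (frontier K) := lt_of_lt_of_le hδ hxd
    set a : Fin n → ℝ := fun i => (⌊(k : ℝ) * x i⌋ : ℝ) / k with ha
    have haub : ∀ i, a i ≤ x i ∧ x i ≤ a i + 1 / k := by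
      intro i
      constructor
      · rw [ha, div_le_iff₀ hkpos]
        calc ((⌊(k : ℝ) * x i⌋ : ℝ)) ≤ (k : ℝ) * x i := Int.floor_le _
          _ = x i * k := mul_comm _ _
      · have hfl := Int.lt_floor_add_one ((k : ℝ) * x i)
        simp only [ha]
        rw [← add_div, le_div_iff₀ hkpos, mul_comm]
        push_cast
        linarith
    set C : Set (EuclideanSpace ℝ (Fin n)) :=
      WithLp.ofLp ⁻¹' Set.pi Set.univ (fun i => ({a i, a i + 1 / k} : Set ℝ)) with hC
    have hCK' : C ⊆ K' := by
      intro y hy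
      have hyd : ∀ i, |x i - y i| ≤ 1 / k := by
        intro i
        rcases hy i (Set.mem_univ i) with h | h
        · rw [h, abs_sub_le_iff]
          constructor
          · linarith [(haub i).1, (haub i).2]
          · linarith [(haub i).1, one_div_pos.2 hkpos]
        · rw [Set.mem_singleton_iff] at h
          rw [h, abs_sub_le_iff]
          constructor
          · linarith [(haub i).2, one_div_pos.2 hkpos]
          · linarith [(haub i).1, (haub i).2]
      have hdist : dist x y ≤ Real.sqrt n / k := by
        rw [EuclideanSpace.dist_eq]
        have h1 : ∑ i, dist (x i) (y i) ^ 2 ≤ (n : ℝ) * (1 / k) ^ 2 := by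
          calc ∑ i, dist (x i) (y i) ^ 2 ≤ ∑ _i : Fin n, (1 / (k:ℝ)) ^ 2 := by
                apply Finset.sum_le_sum
                intro i _
                have := hyd i
                rw [Real.dist_eq]
                exact pow_le_pow_left₀ dist_nonneg (Real.dist_eq _ _ ▸ this) 2
            _ = (n : ℝ) * (1 / k) ^ 2 := by
                rw [Finset.sum_const, Finset.card_fin, nsmul_eq_mul]
        calc Real.sqrt (∑ i, dist (x i) (y i) ^ 2) ≤ Real.sqrt ((n : ℝ) * (1 / k) ^ 2) :=
              Real.sqrt_le_sqrt h1
          _ = Real.sqrt n / k := by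
              rw [Real.sqrt_mul (Nat.cast_nonneg n), Real.sqrt_sq (by positivity)]
              ring
      have hyK : y ∈ K :=
        mem_of_dist_le_infDist hKc.isClosed hxK hinf (hdist.trans hxd)
      apply hlat y hyK
      intro i
      rcases hy i (Set.mem_univ i) with h | h
      · exact ⟨⌊(k : ℝ) * x i⌋, h⟩
      · rw [Set.mem_singleton_iff] at h
        refine ⟨⌊(k : ℝ) * x i⌋ + 1, ?_⟩
        rw [h, ha]
        push_cast
        field_simp
    have hxC : x ∈ convexHull ℝ C := by
      have hmem : WithLp.ofLp x ∈
          Set.pi Set.univ (fun i => convexHull ℝ ({a i, a i + 1 / k} : Set ℝ)) := by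
        intro i _
        show x i ∈ convexHull ℝ ({a i, a i + 1 / k} : Set ℝ)
        rw [convexHull_pair,
          segment_eq_Icc (by linarith [(haub i).1, (haub i).2, one_div_pos.2 hkpos])]
        exact ⟨(haub i).1, (haub i).2⟩
      rw [← convexHull_pi] at hmem
      have himg : C = (WithLp.linearEquiv 2 ℝ (Fin n → ℝ)).symm.toLinearMap ''
          Set.pi Set.univ (fun i => ({a i, a i + 1 / k} : Set ℝ)) := by
        ext y
        exact ⟨fun h => ⟨WithLp.ofLp y, h, rfl⟩, by rintro ⟨z, hz, rfl⟩; exact hz⟩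
      rw [himg, ← LinearMap.image_convexHull]
      exact ⟨_, hmem, rfl⟩
    exact convexHull_min hCK' hK'conv hxC
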